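/- For n ≥ 2, s = n/(n-1), c > 0, and φ(t) = exp(-(c·log(1/t))^{1/s}) with inverse u = φ⁻¹, there exists a constant C' > 0 (depending on n and c) such that for all sufficiently small r > 0, ∫_r^{r₀} (u(t)/u'(t))^{n-1} dt/t^n ≤ C'·log log(1/r), and hence r^n·exp(C₂·∫_r^{r₀}(u(t)/u'(t))^{n-1} dt/t^n) ≤ r^n·(log(1/r))^{C} for some C = C(n, c, C₂). -/

import Mathlib

open Filter Set Real

private lemma aux_U_deriv (c s : ℝ) (hc : 0 < c) {t : ℝ} (ht0 : 0 < t) (ht1 : t < 1) :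
    HasDerivAt (fun t => Real.exp (-(-Real.log t) ^ s / c))
      (Real.exp (-(-Real.log t) ^ s / c) * (s * (-Real.log t) ^ (s - 1) / (c * t))) t := by
  have hX : 0 < -Real.log t := by
    have := Real.log_neg ht0 ht1; linarith
  have h1 : HasDerivAt (fun t : ℝ => -Real.log t) (-t⁻¹) t :=
    (Real.hasDerivAt_log (ne_of_gt ht0)).neg
  have h2 : HasDerivAt (fun t : ℝ => (-Real.log t) ^ s)
      ((-t⁻¹) * s * (-Real.log t) ^ (s - 1)) t :=
    h1.rpow_const (Or.inl (ne_of_gt hX))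
  have h3 : HasDerivAt (fun t : ℝ => -(-Real.log t) ^ s / c)
      (-((-t⁻¹) * s * (-Real.log t) ^ (s - 1)) / c) t := h2.neg.div_const c
  have h4 := h3.exp
  have hval : -((-t⁻¹) * s * (-Real.log t) ^ (s - 1)) / c
      = s * (-Real.log t) ^ (s - 1) / (c * t) := by
    rw [div_eq_div_iff hc.ne' (mul_ne_zero hc.ne' ht0.ne')]
    linear_combination (s * (-Real.log t) ^ (s - 1) * c) * inv_mul_cancel₀ ht0.ne'
  rw [← hval]
  exact h4

/-- For `n ≥ 2`, `s = n/(n-1)`, `c > 0`, and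
`φ(t) = exp(-(c log(1/t))^{1/s})` with inverse `u = φ⁻¹`, there is `C' > 0`
(depending on `n` and `c`) such that for all sufficiently small `r > 0`,
`∫_r^{r₀} (u(t)/u'(t))^{n-1} dt/t^n ≤ C' log log(1/r)`, and hence
`r^n exp(C₂ ∫_r^{r₀} (u(t)/u'(t))^{n-1} dt/t^n) ≤ r^n (log(1/r))^C` for some
`C = C(n, c, C₂)`. -/
theorem stmt3
    (n : ℕ) (hn : 2 ≤ n) (c C₂ : ℝ) (hc : 0 < c) (hC₂ : 0 < C₂)
    (s : ℝ) (hs : s = (n : ℝ) / (n - 1))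
    (r₀ : ℝ) (hr₀ : 0 < r₀) (hr₀1 : r₀ < 1)
    (u : ℝ → ℝ)
    (hu_pos : ∀ t ∈ Ioo (0:ℝ) 1, 0 < u t ∧ u t < 1)
    (hu_inv : ∀ t ∈ Ioo (0:ℝ) 1,
      Real.exp (-(c * Real.log (1 / u t)) ^ (1 / s)) = t)
    (hu_diff : ∀ t ∈ Ioo (0:ℝ) 1, DifferentiableAt ℝ u t)
    (hu_deriv_pos : ∀ t ∈ Ioo (0:ℝ) 1, 0 < deriv u t) :
    (∃ C' > (0:ℝ), ∀ᶠ r in nhdsWithin 0 (Ioi 0),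
      ∫ t in r..r₀, (u t / deriv u t) ^ (n - 1) / t ^ n
        ≤ C' * Real.log (Real.log (1 / r))) ∧
    (∃ C > (0:ℝ), ∀ᶠ r in nhdsWithin 0 (Ioi 0),
      r ^ n * Real.exp (C₂ * ∫ t in r..r₀, (u t / deriv u t) ^ (n - 1) / t ^ n)
        ≤ r ^ n * Real.log (1 / r) ^ C) := by
  have hnR : (2:ℝ) ≤ (n:ℝ) := by exact_mod_cast hn
  have hn1' : (0:ℝ) < (n:ℝ) - 1 := by linarith
  have hs_pos : 0 < s := by
    rw [hs]; exact div_pos (by linarith) hn1'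
  have hs_ne : s ≠ 0 := ne_of_gt hs_pos
  have hsn : s * ((n:ℝ) - 1) = n := by rw [hs]; field_simp
  have hsm1 : (1 - s) * ((n:ℝ) - 1) = -1 := by linear_combination -hsn
  have hcast : ((n - 1 : ℕ) : ℝ) = (n:ℝ) - 1 := by
    have h1 : 1 ≤ n := by omega
    push_cast [Nat.cast_sub h1]; ring
  have hK : (0:ℝ) < (c/s)^(n-1) := pow_pos (div_pos hc hs_pos) _
  have hlog : ∀ t ∈ Ioo (0:ℝ) 1, 0 < -Real.log t := by
    intro t ht
    have := Real.log_neg ht.1 ht.2; linarith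
  -- closed form for u
  have hueq : ∀ t ∈ Ioo (0:ℝ) 1, u t = Real.exp (-(-Real.log t) ^ s / c) := by
    intro t ht
    obtain ⟨hu0, hu1⟩ := hu_pos t ht
    have hL : Real.log (1 / u t) = -Real.log (u t) := by
      rw [one_div, Real.log_inv]
    have hLpos : 0 < -Real.log (u t) := by
      have := Real.log_neg hu0 hu1; linarith
    have hlogkey := congrArg Real.log (hu_inv t ht)
    rw [Real.log_exp] at hlogkey
    have h2 : (c * (-Real.log (u t))) ^ (1 / s) = -Real.log t := by
      rw [← hL]; linarith [hlogkey]
    have hnn : (0:ℝ) ≤ c * (-Real.log (u t)) := by positivity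
    have h3 : c * (-Real.log (u t)) = (-Real.log t) ^ s := by
      calc c * (-Real.log (u t)) = (c * (-Real.log (u t))) ^ ((1/s) * s) := by
            rw [one_div_mul_cancel hs_ne, Real.rpow_one]
        _ = ((c * (-Real.log (u t))) ^ (1/s)) ^ s := Real.rpow_mul hnn _ _
        _ = (-Real.log t) ^ s := by rw [h2]
    have h4 : Real.log (u t) = -(-Real.log t) ^ s / c := by
      rw [eq_div_iff (ne_of_gt hc)]
      linear_combination -h3
    rw [← Real.exp_log hu0, h4]
  -- derivative of u
  have hderiv : ∀ t ∈ Ioo (0:ℝ) 1,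
      deriv u t = Real.exp (-(-Real.log t) ^ s / c) * (s * (-Real.log t) ^ (s - 1) / (c * t)) := by
    intro t ht
    have hev : u =ᶠ[nhds t] (fun t => Real.exp (-(-Real.log t) ^ s / c)) :=
      Filter.eventuallyEq_of_mem (isOpen_Ioo.mem_nhds ht) hueq
    rw [hev.deriv_eq, (aux_U_deriv c s hc ht.1 ht.2).deriv]
  -- ratio formula
  have hratio : ∀ t ∈ Ioo (0:ℝ) 1,
      u t / deriv u t = (c / s) * t * (-Real.log t) ^ (1 - s) := by
    intro t ht
    have hXp := hlog t ht
    have hE : (0:ℝ) < Real.exp (-(-Real.log t) ^ s / c) := Real.exp_pos _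
    have hXs : (0:ℝ) < (-Real.log t) ^ (s - 1) := Real.rpow_pos_of_pos hXp _
    rw [hderiv t ht, hueq t ht, show (1 - s) = -(s-1) by ring, Real.rpow_neg hXp.le]
    field_simp
  -- integrand formula
  have hinteg : ∀ t ∈ Ioo (0:ℝ) 1,
      (u t / deriv u t) ^ (n-1) / t ^ n = (c/s)^(n-1) / (t * (-Real.log t)) := by
    intro t ht
    have hXp := hlog t ht
    rw [hratio t ht, mul_pow, mul_pow]
    have hpow : ((-Real.log t) ^ (1 - s)) ^ (n - 1) = (-Real.log t)⁻¹ := by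
      rw [← Real.rpow_natCast ((-Real.log t) ^ (1-s)) (n-1), ← Real.rpow_mul hXp.le,
        hcast, hsm1, Real.rpow_neg_one]
    have htn : t ^ n = t ^ (n-1) * t := by
      conv_lhs => rw [show n = (n-1)+1 by omega]
      rw [pow_succ]
    rw [hpow, htn,
      div_eq_div_iff (mul_pos (pow_pos ht.1 (n-1)) ht.1).ne' (mul_pos ht.1 hXp).ne']
    linear_combination ((c/s)^(n-1) * t^(n-1) * t) * inv_mul_cancel₀ hXp.ne'
  -- antiderivative
  have hF : ∀ t ∈ Ioo (0:ℝ) 1,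
      HasDerivAt (fun t => -(c/s)^(n-1) * Real.log (-Real.log t))
        ((c/s)^(n-1) / (t * (-Real.log t))) t := by
    intro t ht
    have hXp := hlog t ht
    have h1 : HasDerivAt (fun t : ℝ => -Real.log t) (-t⁻¹) t :=
      (Real.hasDerivAt_log ht.1.ne').neg
    have h2 := h1.log hXp.ne'
    have h3 := HasDerivAt.const_mul (-(c/s)^(n-1) : ℝ) h2
    convert h3 using 1 <;> try rfl
    field_simp
  -- value of the integral
  have hintval : ∀ r, 0 < r → r < r₀ →
      (∫ t in r..r₀, (u t / deriv u t) ^ (n - 1) / t ^ n)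
        = (c/s)^(n-1) * (Real.log (-Real.log r) - Real.log (-Real.log r₀)) := by
    intro r hr0 hrr
    have hsub : Set.uIcc r r₀ ⊆ Ioo (0:ℝ) 1 := by
      rw [Set.uIcc_of_le hrr.le]
      exact Set.Icc_subset_Ioo hr0 hr₀1
    have hcontg : ContinuousOn (fun t : ℝ => (c/s)^(n-1) / (t * (-Real.log t)))
        (Set.uIcc r r₀) := by
      apply continuousOn_const.div
      · exact continuousOn_id.mul
          ((Real.continuousOn_log.mono
            (fun x hx => Set.mem_compl_singleton_iff.mpr (hsub hx).1.ne')).neg)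
      · intro x hx
        exact (mul_pos (hsub hx).1 (hlog x (hsub hx))).ne'
    have hcontf : ContinuousOn (fun t => (u t / deriv u t) ^ (n - 1) / t ^ n)
        (Set.uIcc r r₀) :=
      hcontg.congr (fun x hx => hinteg x (hsub hx))
    have hint : IntervalIntegrable (fun t => (u t / deriv u t) ^ (n - 1) / t ^ n)
        MeasureTheory.volume r r₀ := hcontf.intervalIntegrable
    have heq := intervalIntegral.integral_eq_sub_of_hasDerivAt
      (f := fun t => -(c/s)^(n-1) * Real.log (-Real.log t))
      (f' := fun t => (u t / deriv u t) ^ (n - 1) / t ^ n)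
      (fun x hx => by
        have h := hF x (hsub hx)
        rwa [← hinteg x (hsub hx)] at h) hint
    rw [heq]; ring
  -- the master eventual estimate
  have hC'pos : (0:ℝ) < (c/s)^(n-1) * (1 + |Real.log (-Real.log r₀)|) := by
    apply mul_pos hK; positivity
  have hmem : Ioo (0:ℝ) (min r₀ (Real.exp (-Real.exp 1))) ∈ nhdsWithin (0:ℝ) (Ioi 0) :=
    Ioo_mem_nhdsGT_of_mem ⟨le_refl 0, lt_min hr₀ (Real.exp_pos _)⟩
  have hmain : ∀ r ∈ Ioo (0:ℝ) (min r₀ (Real.exp (-Real.exp 1))),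
      (0 < Real.log (1/r)) ∧ (1 ≤ Real.log (Real.log (1/r))) ∧
      (∫ t in r..r₀, (u t / deriv u t) ^ (n - 1) / t ^ n)
        ≤ ((c/s)^(n-1) * (1 + |Real.log (-Real.log r₀)|)) * Real.log (Real.log (1/r)) := by
    intro r hr
    obtain ⟨hr0, hrδ⟩ := hr
    have hrr₀ : r < r₀ := lt_of_lt_of_le hrδ (min_le_left _ _)
    have hre : r < Real.exp (-Real.exp 1) := lt_of_lt_of_le hrδ (min_le_right _ _)
    have hlogr : Real.exp 1 < -Real.log r := by
      have := Real.log_lt_log hr0 hre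
      rw [Real.log_exp] at this; linarith
    have h1r : Real.log (1/r) = -Real.log r := by rw [one_div, Real.log_inv]
    have hXpos : 0 < Real.log (1/r) := by
      rw [h1r]; exact lt_trans (Real.exp_pos 1) hlogr
    have hloglog : 1 ≤ Real.log (Real.log (1/r)) := by
      rw [h1r]
      have := (Real.log_lt_log (Real.exp_pos 1) hlogr).le
      rwa [Real.log_exp] at this
    refine ⟨hXpos, hloglog, ?_⟩
    rw [hintval r hr0 hrr₀]
    have hA1 : 1 ≤ Real.log (-Real.log r) := by rwa [h1r] at hloglog
    rw [h1r]
    set A := Real.log (-Real.log r)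
    set L₀ := Real.log (-Real.log r₀)
    nlinarith [mul_nonneg (mul_nonneg hK.le (abs_nonneg L₀)) (by linarith : (0:ℝ) ≤ A - 1),
      mul_nonneg hK.le (by linarith [neg_abs_le L₀] : (0:ℝ) ≤ |L₀| + L₀)]
  constructor
  · refine ⟨(c/s)^(n-1) * (1 + |Real.log (-Real.log r₀)|), hC'pos, ?_⟩
    filter_upwards [hmem] with r hr
    exact (hmain r hr).2.2
  · refine ⟨C₂ * ((c/s)^(n-1) * (1 + |Real.log (-Real.log r₀)|)), by positivity, ?_⟩
    filter_upwards [hmem] with r hr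
    obtain ⟨hXpos, hloglog, hI⟩ := hmain r hr
    have hrpow : Real.log (1/r) ^ (C₂ * ((c/s)^(n-1) * (1 + |Real.log (-Real.log r₀)|)))
        = Real.exp ((C₂ * ((c/s)^(n-1) * (1 + |Real.log (-Real.log r₀)|)))
            * Real.log (Real.log (1/r))) := by
      rw [Real.rpow_def_of_pos hXpos, mul_comm]
    rw [hrpow]
    apply mul_le_mul_of_nonneg_left _ (pow_nonneg hr.1.le n)
    apply Real.exp_le_exp.mpr
    rw [mul_assoc]
    exact mul_le_mul_of_nonneg_left hI hC₂.le
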